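/- arXiv:1606.04806 — 6 statements merged into one kernel-verified Lean document; each statement's English description precedes it below -/
import Mathlib

section
/- If H = (h_1,...,h_{n+1}) : B^n → B^{n+1} is a proper holomorphic map (i.e. Σ|h_j|^2 < 1 on B^n) and g = 1 - sqrt(1 - Σ_{j=1}^{n+1} h_j^2), then G = (H, g) maps B^n into the Type IV domain D^{IV}_{n+2}, i.e. for each z ∈ B^n, setting W = (h_1(z),...,h_{n+1}(z), g(z)), one has W·conj(W) < 2 and 1 - W·conj(W) + (1/4)|W·W|^2 > 0. -/
/-- If `H = (h₁,…,h_{n+1}) : B^n → B^{n+1}` is a proper holomorphic map and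
`g = 1 - √(1 - ∑ h_j²)`, then `G = (H, g)` maps `B^n` into the Type IV domain
`D^{IV}_{n+2}`. -/
theorem stmt2 (n : ℕ) (hn : 1 ≤ n)
    (h : Fin (n + 1) → (Fin n → ℂ) → ℂ)
    (hol : ∀ j, DifferentiableOn ℂ (h j) {z : Fin n → ℂ | ∑ i, ‖z i‖ ^ 2 < 1})
    (hproper : ∀ z : Fin n → ℂ, (∑ i, ‖z i‖ ^ 2) < 1 →
      (∑ j, ‖h j z‖ ^ 2) < 1)
    (g : (Fin n → ℂ) → ℂ)
    (hg : ∀ z, g z = 1 - (1 - ∑ j, (h j z) ^ 2) ^ ((1 : ℂ) / 2))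
    (z : Fin n → ℂ) (hz : (∑ i, ‖z i‖ ^ 2) < 1)
    (W : Fin (n + 2) → ℂ) (hW : W = Fin.snoc (fun j => h j z) (g z)) :
    (∑ j, ‖W j‖ ^ 2) < 2 ∧
    0 < 1 - (∑ j, ‖W j‖ ^ 2)
        + (1 / 4) * ‖∑ j, (W j) ^ 2‖ ^ 2 := by
  have hH : (∑ j, ‖h j z‖ ^ 2) < 1 := hproper z hz
  set s : ℂ := ∑ j, (h j z) ^ 2 with hs
  have habs_s : ‖s‖ < 1 := by
    calc ‖s‖ ≤ ∑ j, ‖(h j z) ^ 2‖ :=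
          norm_sum_le _ _
    _ = ∑ j, ‖h j z‖ ^ 2 := by simp [norm_pow]
    _ < 1 := hH
  have hw_re : 0 < (1 - s).re := by
    have := Complex.re_le_norm s
    simp only [Complex.sub_re, Complex.one_re]
    linarith
  have hw_ne : (1 - s) ≠ 0 := by
    intro h0
    rw [h0] at hw_re
    simp at hw_re
  set r : ℂ := (1 - s) ^ ((1 : ℂ) / 2) with hrdef
  have hr2 : r ^ 2 = 1 - s := by
    rw [hrdef, one_div]
    have := Complex.cpow_nat_inv_pow (1 - s) (n := 2) (by norm_num)
    simpa using this
  have hr_re : 0 < r.re := by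
    rw [hrdef, Complex.cpow_def_of_ne_zero hw_ne, Complex.exp_re]
    apply mul_pos (Real.exp_pos _)
    have harg : |Complex.arg (1 - s)| < Real.pi / 2 :=
      Complex.abs_arg_lt_pi_div_two_iff.2 (Or.inl hw_re)
    have him : (Complex.log (1 - s) * (1 / 2)).im = Complex.arg (1 - s) / 2 := by
      simp [Complex.mul_im, Complex.log_im]
      ring
    rw [him]
    rw [abs_lt] at harg
    exact Real.cos_pos_of_mem_Ioo ⟨by linarith [Real.pi_pos], by linarith [Real.pi_pos]⟩
  set a : ℝ := r.re
  set b : ℝ := r.im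
  have hre : a ^ 2 - b ^ 2 = (1 - s).re := by
    have := congrArg Complex.re hr2
    rw [pow_two, Complex.mul_re] at this
    rw [← this]; ring
  have hρ : a ^ 2 + b ^ 2 = ‖1 - s‖ := by
    have h1 : ‖r‖ ^ 2 = ‖1 - s‖ := by
      rw [← norm_pow, hr2]
    rw [Complex.sq_norm, Complex.normSq_apply] at h1
    rw [← h1]; ring
  have hρ2 : ‖1 - s‖ < 2 := by
    calc ‖1 - s‖ ≤ ‖(1:ℂ)‖ + ‖s‖ := by
          simpa [sub_eq_add_neg] using norm_add_le 1 (-s)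
    _ < 2 := by simp; linarith
  have h2a : ‖1 - s‖ < 2 * a := by
    nlinarith [hρ, hρ2, hre, hw_re, hr_re]
  have hgz : g z = 1 - r := by rw [hg z, hrdef]
  have habsg : ‖g z‖ ^ 2 < 1 := by
    have he : ‖g z‖ ^ 2 = (1 - a) ^ 2 + b ^ 2 := by
      rw [hgz, Complex.sq_norm, Complex.normSq_apply]
      simp [Complex.sub_re, Complex.sub_im]
      ring
    rw [he]
    nlinarith [hρ, h2a]
  have hsum1 : (∑ j, ‖W j‖ ^ 2)
      = (∑ j, ‖h j z‖ ^ 2) + ‖g z‖ ^ 2 := by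
    subst hW
    rw [Fin.sum_univ_castSucc]
    simp
  have hsum2 : (∑ j, (W j) ^ 2) = s + (g z) ^ 2 := by
    subst hW
    rw [Fin.sum_univ_castSucc]
    simp [hs]
  have hgg : s + (g z) ^ 2 = 2 * g z := by
    rw [hgz]
    linear_combination hr2
  have habs4 : ‖∑ j, (W j) ^ 2‖ ^ 2 = 4 * ‖g z‖ ^ 2 := by
    rw [hsum2, hgg, norm_mul]
    simp
    ring
  constructor
  · rw [hsum1]; linarith
  · rw [hsum1, habs4]; linarith
end

section
/- With R^{IV}_n = (f_1,...,f_{n+1}) as defined (f_i = z_i for i ≤ n-1, f_n = P_n/Q, f_{n+1} = P_{n+1}/Q), the isometry identity Σ_{i=1}^{n+1}|f_i(z)|^2 - (1/4)|Σ_{i=1}^{n+1} f_i(z)^2|^2 = Σ_{i=1}^{n}|z_i|^2 holds for all z ∈ B^n. Consequently R^{IV}_n maps B^n into D^{IV}_{n+1}. -/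
set_option maxHeartbeats 1000000 in

theorem stmt7_aux (m : ℕ) (z : Fin (m + 1) → ℂ)
    (hz : (∑ i, ‖z i‖ ^ 2) < 1)
    (S : ℂ) (hS : S = ∑ i : Fin m, z i.castSucc ^ 2)
    (zn : ℂ) (hzn : zn = z (Fin.last m))
    (fn fn1 : ℂ)
    (hfn : fn = ((1 / 2) * S - zn ^ 2 + zn) / ((Real.sqrt 2 : ℂ) * (1 - zn)))
    (hfn1 : fn1 = (-Complex.I) * ((1 / 2) * S + zn ^ 2 - zn)
        / ((Real.sqrt 2 : ℂ) * (1 - zn))) :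
    (∑ i : Fin m, ‖z i.castSucc‖ ^ 2)
        + ‖fn‖ ^ 2 + ‖fn1‖ ^ 2
        - (1 / 4) * ‖S + fn ^ 2 + fn1 ^ 2‖ ^ 2
      = ∑ i, ‖z i‖ ^ 2 ∧
    (∑ i : Fin m, ‖z i.castSucc‖ ^ 2)
        + ‖fn‖ ^ 2 + ‖fn1‖ ^ 2 < 2 ∧
    0 < 1 - ((∑ i : Fin m, ‖z i.castSucc‖ ^ 2)
          + ‖fn‖ ^ 2 + ‖fn1‖ ^ 2)
        + (1 / 4) * ‖S + fn ^ 2 + fn1 ^ 2‖ ^ 2 := by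
  set s : ℝ := ∑ i : Fin m, ‖z i.castSucc‖ ^ 2 with hs
  have h0s : 0 ≤ s := Finset.sum_nonneg fun i _ => by positivity
  have hz' : s + ‖zn‖ ^ 2 < 1 := by
    rw [hzn]; rwa [Fin.sum_univ_castSucc] at hz
  have habs : ‖zn‖ < 1 := by
    nlinarith [norm_nonneg zn]
  have hw : (1 - zn) ≠ 0 := by
    intro h
    have : zn = 1 := by linear_combination -h
    rw [this] at habs; simp at habs
  have hnw : Complex.normSq (1 - zn) ≠ 0 := by
    simpa [Complex.normSq_eq_zero] using hw
  have hnwpos : 0 < Complex.normSq (1 - zn) := Complex.normSq_pos.mpr hw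
  have hSle : ‖S‖ ≤ s := by
    calc ‖S‖ ≤ ∑ i : Fin m, ‖z i.castSucc ^ 2‖ := by
          rw [hS]; exact norm_sum_le _ _
      _ = s := by simp [norm_pow, hs]
  -- key identity 1
  have h2 : ((Real.sqrt 2 : ℝ) : ℂ) ^ 2 = 2 := by
    rw [← Complex.ofReal_pow, Real.sq_sqrt (by norm_num)]; norm_num
  have h20 : ((Real.sqrt 2 : ℝ) : ℂ) ≠ 0 := by
    simpa using Real.sqrt_ne_zero'.mpr (by norm_num)
  have key1 : S + fn ^ 2 + fn1 ^ 2 = S / (1 - zn) := by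
    rw [hfn, hfn1]
    field_simp
    ring_nf
    rw [Complex.I_sq, h2]
    ring
  have h2' : Complex.normSq ((Real.sqrt 2 : ℝ) : ℂ) = 2 := by
    rw [Complex.normSq_ofReal, Real.mul_self_sqrt (by norm_num)]
  have key2 : Complex.normSq fn + Complex.normSq fn1
      = Complex.normSq S / (4 * Complex.normSq (1 - zn)) + Complex.normSq zn := by
    rw [hfn, hfn1]
    rw [map_div₀, map_div₀, Complex.normSq_mul, Complex.normSq_mul, h2']
    have hI : Complex.normSq (-Complex.I) = 1 := by simp
    rw [hI, one_mul]
    field_simp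
    simp only [Complex.normSq_apply, Complex.add_re, Complex.add_im, Complex.sub_re,
      Complex.sub_im, Complex.mul_re, Complex.mul_im, Complex.one_re, Complex.one_im, pow_two]
    norm_num
    ring
  -- abbreviations
  set a : ℝ := Complex.normSq S with ha
  set b : ℝ := Complex.normSq (1 - zn) with hb
  have hznt : Complex.normSq zn = ‖zn‖ ^ 2 := (Complex.sq_norm zn).symm
  have habsS : ‖S + fn ^ 2 + fn1 ^ 2‖ ^ 2 = a / b := by
    rw [key1, norm_div, div_pow, Complex.sq_norm, Complex.sq_norm]
  have hfn2 : ‖fn‖ ^ 2 = Complex.normSq fn := Complex.sq_norm fn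
  have hfn12 : ‖fn1‖ ^ 2 = Complex.normSq fn1 := Complex.sq_norm fn1
  have h0a : 0 ≤ a := Complex.normSq_nonneg S
  have h0t : 0 ≤ ‖zn‖ := norm_nonneg zn
  have hale : a ≤ s ^ 2 := by
    rw [ha, ← Complex.sq_norm]
    nlinarith [norm_nonneg S]
  have hble : (1 - ‖zn‖) ^ 2 ≤ b := by
    have h1 : 1 - ‖zn‖ ≤ ‖1 - zn‖ := by
      have := norm_sub_norm_le (1 : ℂ) zn
      simpa using this
    rw [hb, ← Complex.sq_norm]
    nlinarith [norm_nonneg (1 - zn)]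
  have h1u : 0 < 1 - ‖zn‖ := by linarith
  have hs2 : s < 2 * (1 - ‖zn‖) := by nlinarith [hz', sq_nonneg (1 - ‖zn‖)]
  have hab : a < 4 * b := by nlinarith [hs2, h0s, hble, hale, h1u]
  have hT : a / (4 * b) < 1 := (div_lt_one (by positivity)).mpr hab
  have hT0 : 0 ≤ a / (4 * b) := by positivity
  have hq : a / (4 * b) = 1 / 4 * (a / b) := by field_simp
  refine ⟨?_, ?_, ?_⟩
  · rw [Fin.sum_univ_castSucc, ← hzn, ← hs, hfn2, hfn12, habsS]
    linarith [key2, hq, hznt]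
  · rw [hfn2, hfn12]
    linarith [key2, hq, hznt, hz', hT, hT0]
  · rw [hfn2, hfn12, habsS]
    linarith [key2, hq, hznt, hz', hT0]



/-- For `R^{IV}_n = (z₁,…,z_{n-1}, Pₙ/Q, P_{n+1}/Q)` the isometry identity
`∑_{i=1}^{n+1}|f_i|² - (1/4)|∑_{i=1}^{n+1} f_i²|² = ∑|z_i|²` holds on `B^n`;
consequently `R^{IV}_n` maps `B^n` into `D^{IV}_{n+1}`. -/
theorem stmt7 (n : ℕ) (hn : 2 ≤ n) (z : Fin n → ℂ)
    (hz : (∑ i, ‖z i‖ ^ 2) < 1)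
    (S : ℂ) (hS : S = ∑ i : Fin (n - 1), z ⟨(i : ℕ), by omega⟩ ^ 2)
    (zn : ℂ) (hzn : zn = z ⟨n - 1, by omega⟩)
    (fn fn1 : ℂ)
    (hfn : fn = ((1 / 2) * S - zn ^ 2 + zn) / ((Real.sqrt 2 : ℂ) * (1 - zn)))
    (hfn1 : fn1 = (-Complex.I) * ((1 / 2) * S + zn ^ 2 - zn)
        / ((Real.sqrt 2 : ℂ) * (1 - zn))) :
    (∑ i : Fin (n - 1), ‖z ⟨(i : ℕ), by omega⟩‖ ^ 2)
        + ‖fn‖ ^ 2 + ‖fn1‖ ^ 2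
        - (1 / 4) * ‖S + fn ^ 2 + fn1 ^ 2‖ ^ 2
      = ∑ i, ‖z i‖ ^ 2 ∧
    (∑ i : Fin (n - 1), ‖z ⟨(i : ℕ), by omega⟩‖ ^ 2)
        + ‖fn‖ ^ 2 + ‖fn1‖ ^ 2 < 2 ∧
    0 < 1 - ((∑ i : Fin (n - 1), ‖z ⟨(i : ℕ), by omega⟩‖ ^ 2)
          + ‖fn‖ ^ 2 + ‖fn1‖ ^ 2)
        + (1 / 4) * ‖S + fn ^ 2 + fn1 ^ 2‖ ^ 2 := by
  obtain ⟨m, rfl⟩ : ∃ m, n = m + 1 := ⟨n - 1, by omega⟩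
  exact stmt7_aux m z hz S hS zn hzn fn fn1 hfn hfn1
end

section
/- Define I_{n,0}(z) = (z_1,...,z_{n-1}, 1 - sqrt(1 - Σ_{j=1}^n z_j^2), z_n) for z ∈ B^n. Writing g = 1 - sqrt(1 - Σ_{j=1}^n z_j^2), one has Σ_{i=1}^{n-1}|z_i|^2 + |g|^2 + |z_n|^2 - (1/4)|Σ_{i=1}^{n-1} z_i^2 + g^2 + z_n^2|^2 = Σ_{i=1}^n |z_i|^2 on B^n, and hence I_{n,0} maps B^n into D^{IV}_{n+1}. -/
/-- For `I_{n,0}(z) = (z₁,…,z_{n-1}, 1 - √(1 - ∑ z_j²), zₙ)` with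
`g = 1 - √(1 - ∑ z_j²)` (principal branch), the identity
`∑|z_i|² + |g|² - (1/4)|∑ z_i² + g²|² = ∑|z_i|²` holds on `B^n`, and hence
`I_{n,0}` maps `B^n` into `D^{IV}_{n+1}`. -/
theorem stmt8 (n : ℕ) (hn : 2 ≤ n) (z : Fin n → ℂ)
    (hz : (∑ i, ‖z i‖ ^ 2) < 1)
    (g : ℂ) (hg : g = 1 - (1 - ∑ j, (z j) ^ 2) ^ ((1 : ℂ) / 2)) :
    (∑ i, ‖z i‖ ^ 2) + ‖g‖ ^ 2
        - (1 / 4) * ‖(∑ i, (z i) ^ 2) + g ^ 2‖ ^ 2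
      = ∑ i, ‖z i‖ ^ 2 ∧
    (∑ i, ‖z i‖ ^ 2) + ‖g‖ ^ 2 < 2 ∧
    0 < 1 - ((∑ i, ‖z i‖ ^ 2) + ‖g‖ ^ 2)
        + (1 / 4) * ‖(∑ i, (z i) ^ 2) + g ^ 2‖ ^ 2 := by
  set w : ℂ := 1 - ∑ j, (z j) ^ 2 with hw
  have hsum_abs : ‖∑ j, (z j) ^ 2‖ ≤ ∑ i, ‖z i‖ ^ 2 := by
    calc ‖∑ j, (z j) ^ 2‖ ≤ ∑ j, ‖(z j) ^ 2‖ :=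
          norm_sum_le _ _
      _ = ∑ i, ‖z i‖ ^ 2 := by simp [norm_pow]
  have hlt : ‖∑ j, (z j) ^ 2‖ < 1 := lt_of_le_of_lt hsum_abs hz
  have hwre : 0 < w.re := by
    have h1 := Complex.abs_re_le_norm (∑ j, (z j) ^ 2)
    have h2 : |(∑ j, (z j) ^ 2).re| < 1 := lt_of_le_of_lt h1 hlt
    have : w.re = 1 - (∑ j, (z j) ^ 2).re := by simp [hw]
    rw [this]
    cases abs_lt.mp h2 with
    | intro h3 h4 => linarith
  have hw0 : w ≠ 0 := by
    intro h
    rw [h] at hwre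
    simp at hwre
  set s : ℂ := w ^ ((1 : ℂ) / 2) with hs
  have hs2 : s * s = w := by
    rw [hs, ← Complex.cpow_add _ _ hw0]
    norm_num
  have hres : 0 < s.re := by
    rw [hs, Complex.cpow_def_of_ne_zero hw0, Complex.exp_re]
    have him : (Complex.log w * (1 / 2)).im = Complex.arg w / 2 := by
      simp [Complex.mul_im, Complex.log_im]
      ring
    rw [him]
    have harg : |Complex.arg w| < Real.pi / 2 := by
      rw [Complex.abs_arg_lt_pi_div_two_iff]
      exact Or.inl hwre
    have hpi : 0 < Real.pi := Real.pi_pos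
    have hcos : 0 < Real.cos (Complex.arg w / 2) := by
      apply Real.cos_pos_of_mem_Ioo
      constructor
      · cases abs_lt.mp harg with
        | intro h1 h2 => linarith
      · cases abs_lt.mp harg with
        | intro h1 h2 => linarith
    positivity
  have hgs : g = 1 - s := hg
  have hkey : (∑ i, (z i) ^ 2) + g ^ 2 = 2 * g := by
    have hsumw : (∑ i, (z i) ^ 2) = 1 - w := by rw [hw]; ring
    rw [hsumw, hgs]
    linear_combination hs2
  have habs2 : ‖(∑ i, (z i) ^ 2) + g ^ 2‖ = 2 * ‖g‖ := by
    rw [hkey, norm_mul]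
    simp
  have hgle : ‖g‖ ^ 2 ≤ ‖∑ j, (z j) ^ 2‖ := by
    have h1 : ‖1 - s‖ ≤ ‖1 + s‖ := by
      rw [Complex.norm_def, Complex.norm_def]
      apply Real.sqrt_le_sqrt
      simp [Complex.normSq_apply, Complex.sub_re, Complex.sub_im,
        Complex.add_re, Complex.add_im]
      nlinarith [hres]
    have h2 : (∑ j, (z j) ^ 2) = (1 - s) * (1 + s) := by
      have h3 : (∑ j, (z j) ^ 2) = 1 - w := by rw [hw]; ring
      linear_combination h3 + hs2
    rw [h2, norm_mul, hgs]
    calc ‖1 - s‖ ^ 2 = ‖1 - s‖ * ‖1 - s‖ := pow_two _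
      _ ≤ ‖1 - s‖ * ‖1 + s‖ := by
          exact mul_le_mul_of_nonneg_left h1 (norm_nonneg _)
  refine ⟨?_, ?_, ?_⟩
  · rw [habs2]; ring
  · have : ‖g‖ ^ 2 ≤ ∑ i, ‖z i‖ ^ 2 :=
      le_trans hgle hsum_abs
    linarith
  · rw [habs2]
    have h0 : (1 : ℝ) / 4 * (2 * ‖g‖) ^ 2 = ‖g‖ ^ 2 := by ring
    rw [h0]
    linarith
end

section
/- Let p ≥ 2 and n ≥ 2 be integers. The function (1 - Σ_{j=1}^n |z_j|^2)^p, expanded as a real-analytic function of (z, conj(z)), when written as a Hermitian combination of holomorphic monomials, has at least 3 positive eigenvalues (i.e. its signature (r', s') satisfies r' ≥ 3). Consequently, there is no holomorphic map F : U → C^m on an open set U ∋ 0 in C^n with F(0) = 0 such that (1 - Σ|z_j|^2)^p = 1 - F·conj(F) + (1/4)|F·F|^2 on U, since the right-hand side has at most 2 positive eigenvalues. -/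
open Complex Finset Metric Asymptotics Topology

lemma sum_four_normSq (u v w : ℂ) (t : ℝ) :
    ∑ k ∈ Finset.range 4, Complex.normSq ((Complex.I^k*t)*u + (Complex.I^k*t)^2*v + (Complex.I^k*t)^3*w)
      = 4*(normSq u * t^2 + normSq v * t^4 + normSq w * t^6) := by
  simp only [Finset.sum_range_succ, Finset.sum_range_zero, pow_succ, pow_zero]
  simp only [Complex.normSq_apply, Complex.add_re, Complex.add_im, Complex.mul_re,
    Complex.mul_im, Complex.I_re, Complex.I_im, Complex.ofReal_re, Complex.ofReal_im,
    Complex.one_re, Complex.one_im]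
  ring

lemma vanish_of_le_linear (a K ε : ℝ) (hε : 0 < ε) (h : ∀ t : ℝ, 0 < t → t < ε → |a| ≤ K * t) :
    a = 0 := by
  have hK : 0 ≤ K := by
    have := h (ε/2) (by linarith) (by linarith)
    nlinarith [abs_nonneg a]
  by_contra ha
  have ha' : 0 < |a| := abs_pos.mpr ha
  set t := min (ε/2) (|a|/(K+1)) with ht
  have ht0 : 0 < t := lt_min (by linarith) (by positivity)
  have htε : t < ε := lt_of_le_of_lt (min_le_left _ _) (by linarith)
  have := h t ht0 htε
  have h2 : t ≤ |a|/(K+1) := min_le_right _ _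
  have : |a| ≤ K * (|a|/(K+1)) := le_trans this (by nlinarith)
  rw [le_div_iff₀ (by linarith)] at h2
  nlinarith

lemma isotropic (a b c : ℂ) : ∃ x y : ℂ, (x ≠ 0 ∨ y ≠ 0) ∧ a*x^2 + b*x*y + c*y^2 = 0 := by
  by_cases ha : a = 0
  · exact ⟨1, 0, Or.inl one_ne_zero, by simp [ha]⟩
  · obtain ⟨d, hd⟩ := IsAlgClosed.exists_pow_nat_eq (k := ℂ) (b^2 - 4*a*c) (n := 2) (by norm_num)
    refine ⟨(-b+d)/(2*a), 1, Or.inr one_ne_zero, ?_⟩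
    field_simp
    linear_combination hd

lemma binom_tail (p : ℕ) (hp : 2 ≤ p) (x : ℝ) (h0 : 0 ≤ x) (h1 : x ≤ 1) :
    |1 - (1-x)^p - p*x + (p.choose 2)*x^2| ≤ 2^p * x^3 := by
  have hexp : (1-x)^p = ∑ k ∈ Finset.range (p+1), (-x)^k * 1^(p-k) * (p.choose k) := by
    rw [show (1:ℝ) - x = -x + 1 by ring, add_pow]
  have hsplit : ∑ k ∈ Finset.range (p+1), (-x)^k * 1^(p-k) * (p.choose k)
      = (∑ k ∈ Finset.range 3, (-x)^k * 1^(p-k) * (p.choose k))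
        + ∑ k ∈ Finset.Ico 3 (p+1), (-x)^k * 1^(p-k) * (p.choose k) := by
    rw [Finset.range_eq_Ico, ← Finset.sum_Ico_consecutive _ (by omega : 0 ≤ 3) (by omega : 3 ≤ p+1),
      ← Finset.range_eq_Ico]
  have hr3 : (∑ k ∈ Finset.range 3, (-x)^k * 1^(p-k) * (p.choose k))
      = 1 - p*x + (p.choose 2)*x^2 := by
    simp [Finset.sum_range_succ]
    ring
  have key : 1 - (1-x)^p - p*x + (p.choose 2)*x^2
      = -∑ k ∈ Finset.Ico 3 (p+1), (-x)^k * 1^(p-k) * (p.choose k) := by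
    rw [hexp, hsplit, hr3]; ring
  rw [key, abs_neg]
  calc |∑ k ∈ Finset.Ico 3 (p+1), (-x)^k * 1^(p-k) * (p.choose k)|
      ≤ ∑ k ∈ Finset.Ico 3 (p+1), |(-x)^k * 1^(p-k) * (p.choose k)| :=
        Finset.abs_sum_le_sum_abs _ _
    _ ≤ ∑ k ∈ Finset.Ico 3 (p+1), x^3 * (p.choose k) := by
        apply Finset.sum_le_sum
        intro k hk
        rw [_root_.abs_mul, _root_.abs_mul, _root_.abs_pow, _root_.abs_pow, _root_.abs_neg,
          _root_.abs_of_nonneg h0]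
        simp only [abs_one, one_pow, mul_one, Nat.abs_cast]
        have : x^k ≤ x^3 := pow_le_pow_of_le_one h0 h1 (Finset.mem_Ico.mp hk).1
        exact mul_le_mul_of_nonneg_right this (Nat.cast_nonneg _)
    _ = x^3 * ∑ k ∈ Finset.Ico 3 (p+1), (p.choose k : ℝ) := by rw [Finset.mul_sum]
    _ ≤ x^3 * ∑ k ∈ Finset.range (p+1), (p.choose k : ℝ) := by
        apply mul_le_mul_of_nonneg_left _ (by positivity)
        rw [Finset.range_eq_Ico]
        apply Finset.sum_le_sum_of_subset_of_nonneg (Finset.Ico_subset_Ico (by omega) le_rfl)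
        intro k _ _; positivity
    _ = x^3 * 2^p := by
        norm_cast
        rw [Nat.sum_range_choose]
    _ = 2^p * x^3 := by ring

lemma taylor_bound {E : Type*} [NormedAddCommGroup E] [NormedSpace ℂ E] {g : ℂ → E}
    {ps : FormalMultilinearSeries ℂ ℂ E} (hps : HasFPowerSeriesAt g ps 0) (N : ℕ) :
    ∃ C > 0, ∃ ε > 0, ∀ l : ℂ, ‖l‖ < ε →
      ‖g l - ∑ k ∈ Finset.range N, l^k • ps.coeff k‖ ≤ C * ‖l‖ ^ N := by
  obtain ⟨C, hC, hO⟩ := (hps.isBigO_sub_partialSum_pow N).exists_pos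
  rw [Asymptotics.isBigOWith_iff, Metric.eventually_nhds_iff] at hO
  obtain ⟨ε, hε, hb⟩ := hO
  refine ⟨C, hC, ε, hε, fun l hl => ?_⟩
  have := hb (show dist l 0 < ε by simpa [dist_zero_right] using hl)
  simpa [FormalMultilinearSeries.partialSum, FormalMultilinearSeries.apply_eq_pow_smul_coeff,
    abs_of_nonneg, pow_nonneg] using this

set_option maxHeartbeats 4000000 in
/-- For `p ≥ 2`, `n ≥ 2`, there is no holomorphic map `F : U → ℂ^m` on an open
neighborhood `U` of `0` in `ℂⁿ` with `F(0) = 0` such that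
`(1 - ∑|z_j|²)^p = 1 - F·conj F + (1/4)|F·F|²` on `U` (the left side has at
least 3 positive squares in its Hermitian expansion, the right side at most 2). -/
theorem stmt10 (n m p : ℕ) (hn : 2 ≤ n) (hp : 2 ≤ p)
    (U : Set (Fin n → ℂ)) (hU : IsOpen U) (h0 : (0 : Fin n → ℂ) ∈ U)
    (F : (Fin n → ℂ) → Fin m → ℂ)
    (hol : ∀ j, DifferentiableOn ℂ (fun z => F z j) U)
    (hF0 : F 0 = 0) :
    ¬ ∀ z ∈ U, (1 - ∑ j, ‖z j‖ ^ 2) ^ p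
        = 1 - (∑ j, ‖F z j‖ ^ 2)
          + (1 / 4) * ‖∑ j, (F z j) ^ 2‖ ^ 2 := by
  intro hEq
  set i0 : Fin n := ⟨0, by omega⟩ with hi0
  set i1 : Fin n := ⟨1, by omega⟩ with hi1
  have h01 : i0 ≠ i1 := by simp [hi0, hi1, Fin.ext_iff]
  have hdF : ∀ j, DifferentiableAt ℂ (fun z => F z j) 0 :=
    fun j => (hol j).differentiableAt (hU.mem_nhds h0)
  set D : Fin m → (Fin n → ℂ) →L[ℂ] ℂ := fun j => fderiv ℂ (fun z => F z j) 0 with hD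
  set e₁ : Fin n → ℂ := Pi.single i0 1 with he₁
  set e₂ : Fin n → ℂ := Pi.single i1 1 with he₂
  obtain ⟨x, y, hxy, hiso⟩ := isotropic (∑ j, (D j e₁)^2)
    (∑ j, 2 * (D j e₁) * (D j e₂)) (∑ j, (D j e₂)^2)
  set z₀ : Fin n → ℂ := x • e₁ + y • e₂ with hz₀
  -- the isotropy relation
  have hq : ∑ j, (D j z₀)^2 = 0 := by
    have hDz : ∀ j, D j z₀ = x * D j e₁ + y * D j e₂ := by
      intro j
      rw [hz₀, map_add, map_smul, map_smul, smul_eq_mul, smul_eq_mul]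
    calc ∑ j, (D j z₀)^2
        = ∑ j, ((D j e₁)^2 * x^2 + (2*(D j e₁)*(D j e₂))*(x*y) + (D j e₂)^2*y^2) := by
          refine Finset.sum_congr rfl fun j _ => ?_
          rw [hDz j]; ring
      _ = (∑ j, (D j e₁)^2)*x^2 + (∑ j, 2*(D j e₁)*(D j e₂))*(x*y) + (∑ j, (D j e₂)^2)*y^2 := by
          simp [Finset.sum_add_distrib, Finset.sum_mul]
      _ = 0 := by linear_combination hiso
  -- coordinates of z₀ and positivity of r
  have s1 : e₂ i0 = 0 := by rw [he₂]; exact Pi.single_eq_of_ne h01 1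
  have s2 : e₁ i1 = 0 := by rw [he₁]; exact Pi.single_eq_of_ne (Ne.symm h01) 1
  have s3 : e₁ i0 = 1 := by rw [he₁]; exact Pi.single_eq_same i0 1
  have s4 : e₂ i1 = 1 := by rw [he₂]; exact Pi.single_eq_same i1 1
  have hz₀0 : z₀ i0 = x := by simp [hz₀, s1, s3]
  have hz₀1 : z₀ i1 = y := by simp [hz₀, s2, s4]
  set r : ℝ := ∑ j, ‖z₀ j‖^2 with hr
  have hrpos : 0 < r := by
    have hterm : ∀ j, (0:ℝ) ≤ ‖z₀ j‖^2 := fun j => by positivity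
    rcases hxy with hx | hy
    · have h1 : ‖z₀ i0‖^2 ≤ r := Finset.single_le_sum (fun j _ => hterm j) (Finset.mem_univ i0)
      have : 0 < ‖z₀ i0‖^2 := by rw [hz₀0]; exact pow_pos (norm_pos_iff.mpr hx) 2
      linarith
    · have h1 : ‖z₀ i1‖^2 ≤ r := Finset.single_le_sum (fun j _ => hterm j) (Finset.mem_univ i1)
      have : 0 < ‖z₀ i1‖^2 := by rw [hz₀1]; exact pow_pos (norm_pos_iff.mpr hy) 2
      linarith
  -- neighborhood where the line lies in U
  obtain ⟨d, hd0, hdU⟩ : ∃ d > 0, ∀ l : ℂ, ‖l‖ < d → (l • z₀) ∈ U := by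
    have hc : Continuous (fun l : ℂ => l • z₀) := continuous_id.smul continuous_const
    have : (fun l : ℂ => l • z₀) ⁻¹' U ∈ 𝓝 (0:ℂ) := by
      apply hc.continuousAt.preimage_mem_nhds
      simpa using hU.mem_nhds h0
    rw [Metric.mem_nhds_iff] at this
    obtain ⟨d, hd0, hd⟩ := this
    exact ⟨d, hd0, fun l hl => hd (by simpa [Metric.mem_ball, Complex.dist_eq] using hl)⟩
  set g : ℂ → Fin m → ℂ := fun l => F (l • z₀) with hg
  have hgdiff : DifferentiableOn ℂ g (Metric.ball 0 d) := by
    apply differentiableOn_pi.2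
    intro j
    have hφ : Differentiable ℂ (fun l : ℂ => l • z₀) := differentiable_id.smul_const z₀
    exact (hol j).comp hφ.differentiableOn
      (fun l hl => hdU l (by simpa [Metric.mem_ball, Complex.dist_eq] using hl))
  obtain ⟨ps, hps⟩ : AnalyticAt ℂ g 0 := hgdiff.analyticAt (Metric.ball_mem_nhds 0 hd0)
  have hg0 : g 0 = 0 := by simp [hg, hF0]
  have ha0 : ps.coeff 0 = 0 := by
    have := hps.coeff_zero (fun _ => 1)
    rw [hg0] at this
    exact this
  -- first coefficient is D · z₀
  have ha1 : ps.coeff 1 = fun j => D j z₀ := by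
    have hφd : HasDerivAt (fun l : ℂ => l • z₀) z₀ 0 := by
      simpa using (hasDerivAt_id (0:ℂ)).smul_const z₀
    have hder : ∀ j, HasDerivAt (fun l : ℂ => F (l • z₀) j) (D j z₀) 0 := by
      intro j
      have h1 : HasFDerivAt (fun z => F z j) (D j) ((0:ℂ) • z₀) := by
        simpa using (hdF j).hasFDerivAt
      exact h1.comp_hasDerivAt 0 hφd
    have hgd : HasDerivAt g (fun j => D j z₀) 0 := hasDerivAt_pi.2 hder
    have h2 := hps.deriv
    rw [hgd.deriv] at h2
    exact h2.symm
  have hq1 : ∑ j, (ps.coeff 1 j)^2 = 0 := by rw [ha1]; exact hq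
  -- Taylor bounds of order 2 and 4
  obtain ⟨C2, hC2, e2, he2, hT2⟩ := taylor_bound hps 2
  obtain ⟨C4, hC4, e4, he4, hT4⟩ := taylor_bound hps 4
  have hT2' : ∀ l : ℂ, ‖l‖ < e2 → ∀ j,
      ‖g l j - l * ps.coeff 1 j‖ ≤ C2 * ‖l‖ ^ 2 := by
    intro l hl j
    have h1 := hT2 l hl
    have h2 : ‖(g l - ∑ k ∈ Finset.range 2, l^k • ps.coeff k) j‖
        ≤ ‖g l - ∑ k ∈ Finset.range 2, l^k • ps.coeff k‖ :=
      norm_le_pi_norm _ j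
    have h3 : (g l - ∑ k ∈ Finset.range 2, l^k • ps.coeff k) j
        = g l j - l * ps.coeff 1 j := by
      simp [Finset.sum_range_succ, ha0]
    rw [h3] at h2
    exact h2.trans h1
  have hT4' : ∀ l : ℂ, ‖l‖ < e4 → ∀ j,
      ‖g l j - (l * ps.coeff 1 j + l^2 * ps.coeff 2 j + l^3 * ps.coeff 3 j)‖
        ≤ C4 * ‖l‖ ^ 4 := by
    intro l hl j
    have h1 := hT4 l hl
    have h2 : ‖(g l - ∑ k ∈ Finset.range 4, l^k • ps.coeff k) j‖
        ≤ ‖g l - ∑ k ∈ Finset.range 4, l^k • ps.coeff k‖ :=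
      norm_le_pi_norm _ j
    have h3 : (g l - ∑ k ∈ Finset.range 4, l^k • ps.coeff k) j
        = g l j - (l * ps.coeff 1 j + l^2 * ps.coeff 2 j + l^3 * ps.coeff 3 j) := by
      simp [Finset.sum_range_succ, ha0]
    rw [h3] at h2
    exact h2.trans h1
  -- the function h(λ) = ∑ g_j(λ)² vanishes to order 3
  set hh : ℂ → ℂ := fun l => ∑ j, (g l j)^2 with hhh
  set K3 : ℝ := ∑ j : Fin m, (2 * ‖ps.coeff 1 j‖ * C2 + C2^2) with hK3
  have hhb : ∀ l : ℂ, ‖l‖ < e2 → ‖l‖ ≤ 1 →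
      ‖hh l‖ ≤ K3 * ‖l‖ ^ 3 := by
    intro l hl hl1
    have hsplit : hh l = l^2 * (∑ j, (ps.coeff 1 j)^2)
        + ∑ j, (2 * (l * ps.coeff 1 j) * (g l j - l * ps.coeff 1 j)
            + (g l j - l * ps.coeff 1 j)^2) := by
      rw [hhh, Finset.mul_sum, ← Finset.sum_add_distrib]
      exact Finset.sum_congr rfl fun j _ => by ring
    rw [hsplit, hq1, mul_zero, zero_add]
    calc ‖∑ j, (2 * (l * ps.coeff 1 j) * (g l j - l * ps.coeff 1 j)
            + (g l j - l * ps.coeff 1 j)^2)‖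
        ≤ ∑ j, ‖2 * (l * ps.coeff 1 j) * (g l j - l * ps.coeff 1 j)
            + (g l j - l * ps.coeff 1 j)^2‖ := norm_sum_le _ _
      _ ≤ ∑ j, (2 * ‖ps.coeff 1 j‖ * C2 + C2^2) * ‖l‖ ^ 3 := by
          refine Finset.sum_le_sum fun j _ => ?_
          have hR := hT2' l hl j
          have e1 : ‖2 * (l * ps.coeff 1 j) * (g l j - l * ps.coeff 1 j)‖
              = 2 * (‖l‖ * ‖ps.coeff 1 j‖)
                  * ‖g l j - l * ps.coeff 1 j‖ := by
            rw [norm_mul, norm_mul, norm_mul, Complex.norm_two]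
          have e2' : ‖(g l j - l * ps.coeff 1 j)^2‖
              = ‖g l j - l * ps.coeff 1 j‖^2 := norm_pow _ _
          have h1 : ‖2 * (l * ps.coeff 1 j) * (g l j - l * ps.coeff 1 j)
                + (g l j - l * ps.coeff 1 j)^2‖
              ≤ 2 * (‖l‖ * ‖ps.coeff 1 j‖)
                  * ‖g l j - l * ps.coeff 1 j‖
                + ‖g l j - l * ps.coeff 1 j‖^2 := by
            refine le_trans (norm_add_le _ _) ?_
            rw [e1, e2']
          refine h1.trans ?_
          have hal : (0:ℝ) ≤ ‖l‖ := norm_nonneg _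
          have haj : (0:ℝ) ≤ ‖ps.coeff 1 j‖ := norm_nonneg _
          have hRnn : (0:ℝ) ≤ ‖g l j - l * ps.coeff 1 j‖ := norm_nonneg _
          nlinarith only [hR, hal, haj, hRnn, hl1,
            mul_le_mul_of_nonneg_left hR (mul_nonneg (mul_nonneg (by norm_num : (0:ℝ) ≤ 2) hal) haj),
            mul_self_le_mul_self hRnn hR,
            pow_le_pow_of_le_one hal hl1 (by omega : 3 ≤ 4),
            sq_nonneg C2, mul_nonneg (mul_nonneg hal hal) hal]
      _ = K3 * ‖l‖ ^ 3 := by rw [hK3, Finset.sum_mul]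
  -- identity along the line
  have hline : ∀ l : ℂ, ‖l‖ < d →
      (1 - ‖l‖^2 * r)^p
        = 1 - (∑ j, ‖g l j‖^2) + (1/4) * ‖hh l‖^2 := by
    intro l hl
    have hmem := hdU l hl
    have hId := hEq (l • z₀) hmem
    have hzsum : ∑ j, ‖(l • z₀) j‖^2 = ‖l‖^2 * r := by
      rw [hr, Finset.mul_sum]
      refine Finset.sum_congr rfl fun j _ => ?_
      simp [Pi.smul_apply, smul_eq_mul, norm_mul, mul_pow]
    rw [hzsum] at hId
    exact hId
  -- coefficients
  set B1 : ℝ := ∑ j, Complex.normSq (ps.coeff 1 j) with hB1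
  set B2 : ℝ := ∑ j, Complex.normSq (ps.coeff 2 j) with hB2
  set B3 : ℝ := ∑ j, Complex.normSq (ps.coeff 3 j) with hB3
  have hB1nn : 0 ≤ B1 := Finset.sum_nonneg fun j _ => Complex.normSq_nonneg _
  have hB2nn : 0 ≤ B2 := Finset.sum_nonneg fun j _ => Complex.normSq_nonneg _
  have hB3nn : 0 ≤ B3 := Finset.sum_nonneg fun j _ => Complex.normSq_nonneg _
  set c2 : ℝ := 4*B1 - 4*(p*r) with hc2def
  set c4 : ℝ := 4*B2 + 4*(p.choose 2)*r^2 with hc4def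
  set Kerr : ℝ := ∑ j : Fin m, (2*(‖ps.coeff 1 j‖ + ‖ps.coeff 2 j‖
      + ‖ps.coeff 3 j‖)*C4 + C4^2) with hKerr
  have hKerrnn : 0 ≤ Kerr := Finset.sum_nonneg fun j _ => by positivity
  have hK3nn : 0 ≤ K3 := Finset.sum_nonneg fun j _ => by positivity
  set K : ℝ := 4*2^p*r^3 + K3^2 + 4*B3 + 4*Kerr with hK
  set eps : ℝ := min (min d e2) (min e4 (min 1 (1/(r+1)))) with heps
  have hepspos : 0 < eps := by
    refine lt_min (lt_min hd0 he2) (lt_min he4 (lt_min one_pos ?_))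
    positivity
  have hKey : ∀ t : ℝ, 0 < t → t < eps → |c2*t^2 + c4*t^4| ≤ K*t^5 := by
    intro t ht hte
    have htd : t < d := lt_of_lt_of_le hte ((min_le_left _ _).trans (min_le_left _ _))
    have hte2 : t < e2 := lt_of_lt_of_le hte ((min_le_left _ _).trans (min_le_right _ _))
    have hte4 : t < e4 := lt_of_lt_of_le hte ((min_le_right _ _).trans (min_le_left _ _))
    have ht1 : t ≤ 1 := le_of_lt (lt_of_lt_of_le hte
      ((min_le_right _ _).trans ((min_le_right _ _).trans (min_le_left _ _))))
    have htr : t ≤ 1/(r+1) := le_of_lt (lt_of_lt_of_le hte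
      ((min_le_right _ _).trans ((min_le_right _ _).trans (min_le_right _ _))))
    have hrt1 : t^2*r ≤ 1 := by
      rw [le_div_iff₀ (by linarith : (0:ℝ) < r+1)] at htr
      have h' : t*(t*r) ≤ 1*(t*r) := mul_le_mul_of_nonneg_right ht1 (mul_nonneg ht.le hrpos.le)
      nlinarith only [htr, h', ht.le, hrpos.le]
    have habsk : ∀ k : ℕ, ‖Complex.I^k*(t:ℂ)‖ = t := by
      intro k
      rw [norm_mul, norm_pow, Complex.norm_I, one_pow, one_mul, Complex.norm_real, Real.norm_eq_abs,
        abs_of_pos ht]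
    -- identity at the four rotated points
    have hid : ∀ k ∈ Finset.range 4, (∑ j, Complex.normSq (g (Complex.I^k*(t:ℂ)) j))
        = 1 - (1 - t^2*r)^p + (1/4) * ‖hh (Complex.I^k*(t:ℂ))‖^2 := by
      intro k _
      have h1 := hline (Complex.I^k*(t:ℂ)) (by rw [habsk k]; exact htd)
      rw [habsk k] at h1
      have h2 : ∑ j, ‖g (Complex.I^k*(t:ℂ)) j‖^2
          = ∑ j, Complex.normSq (g (Complex.I^k*(t:ℂ)) j) :=
        Finset.sum_congr rfl fun j _ => Complex.sq_norm _
      rw [h2] at h1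
      linarith only [h1]
    set S : ℝ := ∑ k ∈ Finset.range 4, ∑ j, Complex.normSq (g (Complex.I^k*(t:ℂ)) j) with hSdef
    set H : ℝ := ∑ k ∈ Finset.range 4, ‖hh (Complex.I^k*(t:ℂ))‖^2 with hHdef
    have hS : S = 4 - 4*(1 - t^2*r)^p + (1/4)*H := by
      rw [hSdef, Finset.sum_congr rfl hid, Finset.sum_add_distrib, Finset.sum_sub_distrib,
        Finset.sum_const, Finset.sum_const, ← Finset.mul_sum, ← hHdef]
      simp
      try ring
    have hHnn : 0 ≤ H := Finset.sum_nonneg fun k _ => sq_nonneg _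
    have hHle : H ≤ 4*K3^2*t^6 := by
      have hb : ∀ k ∈ Finset.range 4, ‖hh (Complex.I^k*(t:ℂ))‖^2
          ≤ K3^2*t^6 := by
        intro k _
        have h1 := hhb (Complex.I^k*(t:ℂ)) (by rw [habsk k]; exact hte2)
          (by rw [habsk k]; exact ht1)
        rw [habsk k] at h1
        have h2 : (K3 * t^3)^2 = K3^2*t^6 := by ring
        have := pow_le_pow_left₀ (norm_nonneg _) h1 2
        rw [h2] at this
        exact this
      calc H ≤ ∑ k ∈ Finset.range 4, K3^2*t^6 := Finset.sum_le_sum hb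
        _ = 4*K3^2*t^6 := by simp [Finset.sum_const]; ring
    -- Taylor polynomial decomposition
    set P : ℕ → Fin m → ℂ := fun k j => (Complex.I^k*(t:ℂ)) * ps.coeff 1 j
        + (Complex.I^k*(t:ℂ))^2 * ps.coeff 2 j + (Complex.I^k*(t:ℂ))^3 * ps.coeff 3 j with hP
    set R : ℕ → Fin m → ℂ := fun k j => g (Complex.I^k*(t:ℂ)) j - P k j with hRdef
    have hRle : ∀ k j, ‖R k j‖ ≤ C4 * t^4 := by
      intro k j
      have h1 := hT4' (Complex.I^k*(t:ℂ)) (by rw [habsk k]; exact hte4) j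
      rw [habsk k] at h1
      exact h1
    have hPle : ∀ k j, ‖P k j‖ ≤ (‖ps.coeff 1 j‖
        + ‖ps.coeff 2 j‖ + ‖ps.coeff 3 j‖) * t := by
      intro k j
      have h1 : ‖P k j‖ ≤ ‖(Complex.I^k*(t:ℂ)) * ps.coeff 1 j‖
          + ‖(Complex.I^k*(t:ℂ))^2 * ps.coeff 2 j‖
          + ‖(Complex.I^k*(t:ℂ))^3 * ps.coeff 3 j‖ := by
        refine le_trans (norm_add_le _ _) ?_
        have := norm_add_le ((Complex.I^k*(t:ℂ)) * ps.coeff 1 j)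
          ((Complex.I^k*(t:ℂ))^2 * ps.coeff 2 j)
        linarith
      have e1 : ‖(Complex.I^k*(t:ℂ)) * ps.coeff 1 j‖
          = t * ‖ps.coeff 1 j‖ := by rw [norm_mul, habsk k]
      have e2 : ‖(Complex.I^k*(t:ℂ))^2 * ps.coeff 2 j‖
          = t^2 * ‖ps.coeff 2 j‖ := by rw [norm_mul, norm_pow, habsk k]
      have e3 : ‖(Complex.I^k*(t:ℂ))^3 * ps.coeff 3 j‖
          = t^3 * ‖ps.coeff 3 j‖ := by rw [norm_mul, norm_pow, habsk k]
      rw [e1, e2, e3] at h1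
      have ht2 : t^2 ≤ t := by
        calc t^2 ≤ t^1 := pow_le_pow_of_le_one ht.le ht1 (by omega)
          _ = t := pow_one t
      have ht3 : t^3 ≤ t := by
        calc t^3 ≤ t^1 := pow_le_pow_of_le_one ht.le ht1 (by omega)
          _ = t := pow_one t
      have ha1 := norm_nonneg (ps.coeff 1 j)
      have ha2 := norm_nonneg (ps.coeff 2 j)
      have ha3 := norm_nonneg (ps.coeff 3 j)
      linarith only [h1, mul_le_mul_of_nonneg_left ht2 ha2, mul_le_mul_of_nonneg_left ht3 ha3]
    have hdecomp : ∀ k ∈ Finset.range 4, ∀ j, Complex.normSq (g (Complex.I^k*(t:ℂ)) j)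
        = Complex.normSq (P k j)
          + (2*((P k j) * (starRingEnd ℂ) (R k j)).re + Complex.normSq (R k j)) := by
      intro k _ j
      have h1 : g (Complex.I^k*(t:ℂ)) j = P k j + R k j := by rw [hRdef]; ring
      rw [h1, Complex.normSq_add]
      ring
    set E : ℝ := ∑ k ∈ Finset.range 4, ∑ j,
        (2*((P k j) * (starRingEnd ℂ) (R k j)).re + Complex.normSq (R k j)) with hE
    have hsplit : S = (∑ k ∈ Finset.range 4, ∑ j, Complex.normSq (P k j)) + E := by
      rw [hSdef, hE, ← Finset.sum_add_distrib]
      refine Finset.sum_congr rfl fun k hk => ?_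
      rw [← Finset.sum_add_distrib]
      exact Finset.sum_congr rfl fun j _ => hdecomp k hk j
    have hsumP : ∑ k ∈ Finset.range 4, ∑ j, Complex.normSq (P k j)
        = 4*B1*t^2 + 4*B2*t^4 + 4*B3*t^6 := by
      rw [Finset.sum_comm]
      have h1 : ∀ j : Fin m, ∑ k ∈ Finset.range 4, Complex.normSq (P k j)
          = 4*(Complex.normSq (ps.coeff 1 j)*t^2 + Complex.normSq (ps.coeff 2 j)*t^4
              + Complex.normSq (ps.coeff 3 j)*t^6) :=
        fun j => sum_four_normSq (ps.coeff 1 j) (ps.coeff 2 j) (ps.coeff 3 j) t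
      rw [Finset.sum_congr rfl fun j _ => h1 j]
      have h2 : ∀ j : Fin m, 4*(Complex.normSq (ps.coeff 1 j)*t^2
            + Complex.normSq (ps.coeff 2 j)*t^4 + Complex.normSq (ps.coeff 3 j)*t^6)
          = 4*t^2*Complex.normSq (ps.coeff 1 j) + 4*t^4*Complex.normSq (ps.coeff 2 j)
            + 4*t^6*Complex.normSq (ps.coeff 3 j) := fun j => by ring
      rw [Finset.sum_congr rfl fun j _ => h2 j, Finset.sum_add_distrib, Finset.sum_add_distrib,
        ← Finset.mul_sum, ← Finset.mul_sum, ← Finset.mul_sum, hB1, hB2, hB3]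
      ring
    have hEle : |E| ≤ 4*Kerr*t^5 := by
      have hterm : ∀ k ∈ Finset.range 4, |∑ j, (2*((P k j) * (starRingEnd ℂ) (R k j)).re
          + Complex.normSq (R k j))| ≤ Kerr*t^5 := by
        intro k _
        refine le_trans (Finset.abs_sum_le_sum_abs _ _) ?_
        rw [hKerr, Finset.sum_mul]
        refine Finset.sum_le_sum fun j _ => ?_
        have hre : |((P k j) * (starRingEnd ℂ) (R k j)).re|
            ≤ ‖P k j‖ * ‖R k j‖ := by
          refine le_trans (Complex.abs_re_le_norm _) ?_
          rw [norm_mul, Complex.norm_conj]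
        have hP1 := hPle k j
        have hR1 := hRle k j
        have hPnn := norm_nonneg (P k j)
        have hRnn := norm_nonneg (R k j)
        have habs : |2*((P k j) * (starRingEnd ℂ) (R k j)).re + Complex.normSq (R k j)|
            ≤ 2*(‖P k j‖ * ‖R k j‖) + ‖R k j‖^2 := by
          have h2 : Complex.normSq (R k j) = ‖R k j‖^2 := (Complex.sq_norm _).symm
          rw [abs_le]
          constructor <;> rw [h2] <;>
            linarith only [le_abs_self ((P k j) * (starRingEnd ℂ) (R k j)).re,
              neg_abs_le ((P k j) * (starRingEnd ℂ) (R k j)).re, hre,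
              sq_nonneg (‖R k j‖)]
        refine habs.trans ?_
        have ht8 : t^8 ≤ t^5 := pow_le_pow_of_le_one ht.le ht1 (by omega)
        have ha1 := norm_nonneg (ps.coeff 1 j)
        have ha2 := norm_nonneg (ps.coeff 2 j)
        have ha3 := norm_nonneg (ps.coeff 3 j)
        linarith only [mul_le_mul hP1 hR1 hRnn (by positivity),
          mul_self_le_mul_self hRnn hR1,
          mul_le_mul_of_nonneg_left ht8 (sq_nonneg C4)]
      calc |E| ≤ ∑ k ∈ Finset.range 4, |∑ j, (2*((P k j) * (starRingEnd ℂ) (R k j)).re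
            + Complex.normSq (R k j))| := Finset.abs_sum_le_sum_abs _ _
        _ ≤ ∑ k ∈ Finset.range 4, Kerr*t^5 := Finset.sum_le_sum hterm
        _ = 4*(Kerr*t^5) := by simp [Finset.sum_const]
        _ = 4*Kerr*t^5 := by ring
    -- binomial estimate
    have hbinom := binom_tail p hp (t^2*r) (by positivity) hrt1
    have hbinom' : |1 - (1-t^2*r)^p - p*(t^2*r) + (p.choose 2)*(t^2*r)^2|
        ≤ 2^p * r^3 * t^6 := by
      refine hbinom.trans (le_of_eq ?_)
      ring
    -- assemble
    have hmain : c2*t^2 + c4*t^4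
        = 4*(1 - (1-t^2*r)^p - p*(t^2*r) + (p.choose 2)*(t^2*r)^2)
          + (1/4)*H - 4*B3*t^6 - E := by
      have h1 : 4*B1*t^2 + 4*B2*t^4 + 4*B3*t^6 + E = 4 - 4*(1 - t^2*r)^p + (1/4)*H := by
        rw [← hsumP, ← hsplit, hS]
      rw [hc2def, hc4def]
      linear_combination h1
    have ht65 : t^6 ≤ t^5 := pow_le_pow_of_le_one ht.le ht1 (by omega)
    have hbin1 := abs_le.1 hbinom'
    have hE1 := abs_le.1 hEle
    rw [abs_le]
    have hm1 : K3^2*t^6 ≤ K3^2*t^5 := mul_le_mul_of_nonneg_left ht65 (sq_nonneg _)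
    have hm2 : 4*B3*t^6 ≤ 4*B3*t^5 := mul_le_mul_of_nonneg_left ht65 (by linarith)
    have hm3 : (4*2^p*r^3)*t^6 ≤ (4*2^p*r^3)*t^5 :=
      mul_le_mul_of_nonneg_left ht65 (by positivity)
    have hB3t : 0 ≤ 4*B3*t^6 := by positivity
    constructor
    · rw [hmain, hK]
      linarith only [hbin1.1, hbin1.2, hE1.1, hE1.2, hHnn, hHle, hm1, hm2, hm3, hB3t]
    · rw [hmain, hK]
      linarith only [hbin1.1, hbin1.2, hE1.1, hE1.2, hHnn, hHle, hm1, hm2, hm3, hB3t]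
  -- conclusion: both limits force c2 = 0 and c4 = 0, but c4 > 0
  have hKnn : 0 ≤ K := by
    rw [hK]
    have h1 : (0:ℝ) < 2^p := by positivity
    linarith only [mul_nonneg (mul_nonneg (by norm_num : (0:ℝ) ≤ 4) h1.le)
      (pow_nonneg hrpos.le 3), sq_nonneg K3, hB3nn, hKerrnn]
  have heps1 : eps ≤ 1 := le_trans (min_le_right _ _)
    (le_trans (min_le_right _ _) (min_le_left _ _))
  have hc2 : c2 = 0 := by
    apply vanish_of_le_linear c2 (K + |c4|) eps hepspos
    intro t ht hte
    have hA := hKey t ht hte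
    have ht1 : t ≤ 1 := le_of_lt (lt_of_lt_of_le hte heps1)
    have h3 : |c2| * t^2 ≤ |c2*t^2 + c4*t^4| + |c4| * t^4 := by
      calc |c2| * t^2 = |c2*t^2| := by
            rw [abs_mul, abs_of_pos (by positivity : (0:ℝ) < t^2)]
        _ = |(c2*t^2 + c4*t^4) + (-(c4*t^4))| := by ring_nf
        _ ≤ |c2*t^2 + c4*t^4| + |(-(c4*t^4))| := abs_add_le _ _
        _ = |c2*t^2 + c4*t^4| + |c4| * t^4 := by
            rw [abs_neg, abs_mul, abs_of_pos (by positivity : (0:ℝ) < t^4)]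
    have h53 : t^5 ≤ t^3 := pow_le_pow_of_le_one ht.le ht1 (by omega)
    have h43 : t^4 ≤ t^3 := pow_le_pow_of_le_one ht.le ht1 (by omega)
    have h4 : |c2| * t^2 ≤ ((K + |c4|)*t)*t^2 := by
      nlinarith only [hA, h3, h53, h43, hKnn, abs_nonneg c4]
    exact le_of_mul_le_mul_right h4 (by positivity)
  have hc4 : c4 = 0 := by
    apply vanish_of_le_linear c4 K eps hepspos
    intro t ht hte
    have hA := hKey t ht hte
    rw [hc2, zero_mul, zero_add] at hA
    have h3 : |c4| * t^4 ≤ (K*t)*t^4 := by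
      have h1 : |c4*t^4| = |c4| * t^4 := by
        rw [abs_mul, abs_of_pos (by positivity : (0:ℝ) < t^4)]
      rw [h1] at hA
      nlinarith only [hA]
    exact le_of_mul_le_mul_right h3 (by positivity)
  have hcp : (0:ℝ) < (p.choose 2 : ℝ) := by
    exact_mod_cast Nat.choose_pos hp
  have : (0:ℝ) < c4 := by
    rw [hc4def]
    have := mul_pos hcp (pow_pos hrpos 2)
    linarith only [hB2nn, this]
  rw [hc4] at this
  exact lt_irrefl 0 this
end

section
/- Isometric constant rigidity: Let n ≥ 2 and suppose F : U → C^m is holomorphic on a neighborhood U of 0 in C^n with F(0)=0 and satisfies (1 - Σ_{j=1}^n |z_j|^2)^{λ(n+1)/m} = 1 - F(z)·conj(F(z)) + (1/4)|F(z)·F(z)|^2 on U for some λ > 0 with p := λ(n+1)/m a positive integer. Then p = 1, i.e. λ = m/(n+1). -/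
open Complex Filter Topology

section Aux

private lemma analyticAt_dslope_of_analyticAt {f : ℂ → ℂ} {z₀ : ℂ} (h : AnalyticAt ℂ f z₀) :
    AnalyticAt ℂ (dslope f z₀) z₀ := by
  obtain ⟨q, hq⟩ := h
  exact ⟨_, hq.has_fpower_series_dslope_fslope⟩

private lemma exists_quad_root (A B C : ℂ) :
    ∃ w₁ w₂ : ℂ, (w₁ ≠ 0 ∨ w₂ ≠ 0) ∧ A * w₁ ^ 2 + B * (w₁ * w₂) + C * w₂ ^ 2 = 0 := by
  by_cases hA : A = 0
  · exact ⟨1, 0, Or.inl one_ne_zero, by simp [hA]⟩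
  · obtain ⟨d, hd⟩ := IsAlgClosed.exists_pow_nat_eq (k := ℂ) (B ^ 2 - 4 * A * C) two_pos
    refine ⟨(-B + d) / (2 * A), 1, Or.inr one_ne_zero, ?_⟩
    field_simp
    ring_nf
    linear_combination hd

private lemma binom_remainder (p : ℕ) (hp : 2 ≤ p) :
    ∃ R : ℝ → ℝ, Continuous R ∧ ∀ x : ℝ,
      (1 - x) ^ p = 1 - p * x + (p.choose 2 : ℝ) * x ^ 2 + x ^ 3 * R x := by
  refine ⟨fun x => ∑ k ∈ Finset.range (p - 2), ((p.choose (k + 3) : ℝ)) * (-1) ^ (k + 3) * x ^ k,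
    continuous_finset_sum _ fun k _ => by fun_prop, fun x => ?_⟩
  have h1 : (1 - x) ^ p = ∑ k ∈ Finset.range (p + 1), (-x) ^ k * 1 ^ (p - k) * (p.choose k) := by
    rw [sub_eq_add_neg, add_comm]
    exact add_pow (-x) 1 p
  have h2 : ∑ k ∈ Finset.range (p + 1), (-x) ^ k * 1 ^ (p - k) * ((p.choose k : ℝ))
      = ∑ k ∈ Finset.range 3, (-x) ^ k * 1 ^ (p - k) * ((p.choose k : ℝ))
        + ∑ k ∈ Finset.Ico 3 (p + 1), (-x) ^ k * 1 ^ (p - k) * ((p.choose k : ℝ)) := by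
    rw [Finset.range_eq_Ico, ← Finset.sum_Ico_consecutive _ (by omega) (by omega : 3 ≤ p + 1), Finset.range_eq_Ico]
  have h3 : ∑ k ∈ Finset.Ico 3 (p + 1), (-x) ^ k * 1 ^ (p - k) * ((p.choose k : ℝ))
      = x ^ 3 * ∑ k ∈ Finset.range (p - 2), ((p.choose (k + 3) : ℝ)) * (-1) ^ (k + 3) * x ^ k := by
    rw [Finset.sum_Ico_eq_sum_range, Finset.mul_sum]
    have : p + 1 - 3 = p - 2 := by omega
    rw [this]
    refine Finset.sum_congr rfl fun k _ => ?_
    have : (3 : ℕ) + k = k + 3 := by omega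
    rw [this, neg_pow]
    ring
  rw [h1, h2, h3]
  rw [Finset.sum_range_succ, Finset.sum_range_succ, Finset.sum_range_one]
  simp [Nat.choose_one_right]
  ring

private lemma normSq_expand (ζ c a g : ℂ) :
    Complex.normSq (ζ * (c + ζ * (a + ζ * g))) =
      Complex.normSq ζ * Complex.normSq c
      + (Complex.normSq ζ) ^ 2 * Complex.normSq (a + ζ * g)
      + 2 * Complex.normSq ζ * ((starRingEnd ℂ) ζ * (c * (starRingEnd ℂ) a)).re
      + 2 * Complex.normSq ζ * (((starRingEnd ℂ) ζ) ^ 2 * (c * (starRingEnd ℂ) g)).re := by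
  simp only [Complex.normSq_apply, Complex.mul_re, Complex.mul_im, Complex.add_re,
    Complex.add_im, Complex.conj_re, Complex.conj_im, pow_two]
  ring

private lemma contAux {w : ℂ → ℂ} (hw : ContinuousAt w 0) (e : ℂ) :
    ContinuousAt (fun t : ℝ => w (e * (t : ℂ))) 0 := by
  have h1 : Filter.Tendsto (fun t : ℝ => e * (t : ℂ)) (nhds 0) (nhds 0) := by
    have : ContinuousAt (fun t : ℝ => e * (t : ℂ)) 0 := by fun_prop
    simpa [ContinuousAt] using this
  have h2 := hw.tendsto.comp h1
  simpa [ContinuousAt, Function.comp_def] using h2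

private lemma contAtSum {ι : Type*} [Fintype ι] {f : ι → ℝ → ℝ}
    (h : ∀ j, ContinuousAt (f j) 0) : ContinuousAt (fun t => ∑ j, f j t) 0 :=
  tendsto_finset_sum _ (fun j _ => h j)

private lemma normSq_expand' (e : ℂ) (he : Complex.normSq e = 1) (t : ℝ) (c a g : ℂ) :
    Complex.normSq ((e * (t:ℂ)) * (c + (e * (t:ℂ)) * (a + (e * (t:ℂ)) * g))) =
      t ^ 2 * Complex.normSq c + t ^ 4 * Complex.normSq (a + (e * (t:ℂ)) * g)
      + 2 * t ^ 3 * ((starRingEnd ℂ) e * (c * (starRingEnd ℂ) a)).re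
      + 2 * t ^ 4 * (((starRingEnd ℂ) e) ^ 2 * (c * (starRingEnd ℂ) g)).re := by
  have hns : Complex.normSq (e * (t:ℂ)) = t ^ 2 := by
    rw [Complex.normSq_mul, he, Complex.normSq_ofReal, one_mul, sq]
  have h := normSq_expand (e * (t:ℂ)) c a g
  rw [h, hns]
  have hconj : (starRingEnd ℂ) (e * (t:ℂ)) = (starRingEnd ℂ) e * (t:ℂ) := by
    rw [map_mul, Complex.conj_ofReal]
  rw [hconj]
  have h1 : ((starRingEnd ℂ) e * (t:ℂ) * (c * (starRingEnd ℂ) a)).re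
      = t * ((starRingEnd ℂ) e * (c * (starRingEnd ℂ) a)).re := by
    rw [show (starRingEnd ℂ) e * (t:ℂ) * (c * (starRingEnd ℂ) a)
      = (t:ℂ) * ((starRingEnd ℂ) e * (c * (starRingEnd ℂ) a)) by ring, Complex.re_ofReal_mul]
  have h2 : (((starRingEnd ℂ) e * (t:ℂ)) ^ 2 * (c * (starRingEnd ℂ) g)).re
      = t ^ 2 * (((starRingEnd ℂ) e) ^ 2 * (c * (starRingEnd ℂ) g)).re := by
    rw [show ((starRingEnd ℂ) e * (t:ℂ)) ^ 2 * (c * (starRingEnd ℂ) g)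
      = ((t:ℂ) ^ 2) * (((starRingEnd ℂ) e) ^ 2 * (c * (starRingEnd ℂ) g)) by ring,
      ← Complex.ofReal_pow, Complex.re_ofReal_mul]
  rw [h1, h2]
  ring

end Aux

/-- Isometric constant rigidity: if `F` is holomorphic near `0` in `ℂⁿ` (`n ≥ 2`),
`F(0) = 0`, and `(1 - ∑|z_j|²)^p = 1 - F·conj F + (1/4)|F·F|²` holds on a
neighborhood of `0`, where `p = λ(n+1)/m` is a positive integer for some `λ > 0`,
then `p = 1`, i.e. `λ = m/(n+1)`. -/
theorem stmt11 (n m p : ℕ) (hn : 2 ≤ n) (hm : 1 ≤ m) (hp : 1 ≤ p)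
    (lam : ℝ) (hlam : 0 < lam) (hpl : (p : ℝ) = lam * (n + 1) / m)
    (U : Set (Fin n → ℂ)) (hU : IsOpen U) (h0 : (0 : Fin n → ℂ) ∈ U)
    (F : (Fin n → ℂ) → Fin m → ℂ)
    (hol : ∀ j, DifferentiableOn ℂ (fun z => F z j) U)
    (hF0 : F 0 = 0)
    (heq : ∀ z ∈ U, (1 - ∑ j, ‖z j‖ ^ 2) ^ p
        = 1 - (∑ j, ‖F z j‖ ^ 2)
          + (1 / 4) * ‖∑ j, (F z j) ^ 2‖ ^ 2) :
    p = 1 ∧ lam = m / (n + 1) := by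
  have hp1 : p = 1 := by
    by_contra hne
    have hp2 : 2 ≤ p := by omega
    obtain ⟨R, hRc, hR⟩ := binom_remainder p hp2
    have hdiff : ∀ j, DifferentiableAt ℂ (fun z => F z j) 0 :=
      fun j => (hol j).differentiableAt (hU.mem_nhds h0)
    set D : Fin m → (Fin n → ℂ) →L[ℂ] ℂ := fun j => fderiv ℂ (fun z => F z j) 0 with hDdef
    have hi0 : (0 : ℕ) < n := by omega
    have hi1 : (1 : ℕ) < n := by omega
    set i0 : Fin n := ⟨0, hi0⟩ with hi0def
    set i1 : Fin n := ⟨1, hi1⟩ with hi1def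
    have hne01 : i0 ≠ i1 := by simp [hi0def, hi1def, Fin.ext_iff]
    set α : Fin m → ℂ := fun j => D j (Pi.single i0 1) with hαdef
    set β : Fin m → ℂ := fun j => D j (Pi.single i1 1) with hβdef
    obtain ⟨w₁, w₂, hw, hqr⟩ := exists_quad_root (∑ j, (α j) ^ 2)
      (2 * ∑ j, α j * β j) (∑ j, (β j) ^ 2)
    set z₀ : Fin n → ℂ := w₁ • (Pi.single i0 1 : Fin n → ℂ) + w₂ • (Pi.single i1 1 : Fin n → ℂ) with hz₀def
    set s : ℝ := ∑ v, Complex.normSq (z₀ v) with hsdef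
    have hz0i0 : z₀ i0 = w₁ := by
      simp [hz₀def, Pi.single_apply, hne01, hne01.symm]
    have hz0i1 : z₀ i1 = w₂ := by
      simp [hz₀def, Pi.single_apply, hne01, hne01.symm]
    have hspos : 0 < s := by
      rcases hw with hw1 | hw2
      · exact Finset.sum_pos' (fun v _ => Complex.normSq_nonneg _)
          ⟨i0, Finset.mem_univ _, by rw [hz0i0]; exact Complex.normSq_pos.mpr hw1⟩
      · exact Finset.sum_pos' (fun v _ => Complex.normSq_nonneg _)
          ⟨i1, Finset.mem_univ _, by rw [hz0i1]; exact Complex.normSq_pos.mpr hw2⟩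
    -- restriction to the line
    set f : Fin m → ℂ → ℂ := fun j ζ => F (ζ • z₀) j with hfdef
    have hVopen : IsOpen {ζ : ℂ | ζ • z₀ ∈ U} :=
      hU.preimage (continuous_id.smul continuous_const)
    have hV0 : (0 : ℂ) ∈ {ζ : ℂ | ζ • z₀ ∈ U} := by simp [h0]
    have hfa : ∀ j, AnalyticAt ℂ (f j) 0 := by
      intro j
      have hd : DifferentiableOn ℂ (f j) {ζ : ℂ | ζ • z₀ ∈ U} :=
        (hol j).comp ((differentiable_id.smul_const z₀).differentiableOn)
          (fun ζ hζ => hζ)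
      exact hd.analyticAt (hVopen.mem_nhds hV0)
    set g1 : Fin m → ℂ → ℂ := fun j => dslope (f j) 0 with hg1def
    set g2 : Fin m → ℂ → ℂ := fun j => dslope (g1 j) 0 with hg2def
    set g3 : Fin m → ℂ → ℂ := fun j => dslope (g2 j) 0 with hg3def
    have hg1a : ∀ j, AnalyticAt ℂ (g1 j) 0 := fun j => analyticAt_dslope_of_analyticAt (hfa j)
    have hg2a : ∀ j, AnalyticAt ℂ (g2 j) 0 := fun j => analyticAt_dslope_of_analyticAt (hg1a j)
    have hg3a : ∀ j, ContinuousAt (g3 j) 0 :=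
      fun j => (analyticAt_dslope_of_analyticAt (hg2a j)).continuousAt
    set c : Fin m → ℂ := fun j => g1 j 0 with hcdef
    set a : Fin m → ℂ := fun j => g2 j 0 with hadef
    set ρ : Fin m → ℂ → ℂ := fun j ζ => a j + ζ * g3 j ζ with hρdef
    have hρ0 : ∀ j, ρ j 0 = a j := by intro j; simp [hρdef]
    have hρcont : ∀ j (e : ℂ), ContinuousAt (fun t : ℝ => ρ j (e * (t:ℂ))) 0 := by
      intro j e
      apply ContinuousAt.add continuousAt_const
      exact ContinuousAt.mul (by fun_prop) (contAux (hg3a j) e)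
    have hdecomp : ∀ j (ζ : ℂ), f j ζ = ζ * (c j + ζ * ρ j ζ) := by
      intro j ζ
      have e1 : f j ζ - f j 0 = ζ * g1 j ζ := by
        have := sub_smul_dslope (f j) 0 ζ
        simpa [smul_eq_mul] using this.symm
      have e2 : g1 j ζ - g1 j 0 = ζ * g2 j ζ := by
        have := sub_smul_dslope (g1 j) 0 ζ
        simpa [smul_eq_mul] using this.symm
      have e3 : g2 j ζ - g2 j 0 = ζ * g3 j ζ := by
        have := sub_smul_dslope (g2 j) 0 ζ
        simpa [smul_eq_mul] using this.symm
      have hf0 : f j 0 = 0 := by simp [hfdef, hF0]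
      have : f j ζ = ζ * g1 j ζ := by rw [← e1, hf0, sub_zero]
      rw [this, hρdef]
      have hg1 : g1 j ζ = c j + ζ * g2 j ζ := by rw [hcdef]; linear_combination e2
      have hg2 : g2 j ζ = a j + ζ * g3 j ζ := by rw [hadef]; linear_combination e3
      rw [hg1, hg2]
    have hc : ∀ j, c j = D j z₀ := by
      intro j
      have h1 : HasFDerivAt (fun z => F z j) (D j) ((0:ℂ) • z₀) := by
        simpa using (hdiff j).hasFDerivAt
      have h2 : HasDerivAt (fun ζ : ℂ => ζ • z₀) z₀ 0 := by
        simpa using (hasDerivAt_id (0:ℂ)).smul_const z₀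
      have h3 : HasDerivAt (f j) (D j z₀) 0 := by
        have h := h1.comp_hasDerivAt (0:ℂ) h2
        exact h
      rw [hcdef]
      show dslope (f j) 0 0 = D j z₀
      rw [dslope_same]
      exact h3.deriv
    have hQ : ∑ j, (c j) ^ 2 = 0 := by
      have hDz : ∀ j, D j z₀ = w₁ * α j + w₂ * β j := by
        intro j
        rw [hz₀def, map_add, map_smul, map_smul, smul_eq_mul, smul_eq_mul, hαdef, hβdef]
      have hstep : ∑ j, (c j) ^ 2
          = (∑ j, (α j) ^ 2) * w₁ ^ 2 + (2 * ∑ j, α j * β j) * (w₁ * w₂)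
            + (∑ j, (β j) ^ 2) * w₂ ^ 2 := by
        calc ∑ j, (c j) ^ 2
            = ∑ j, ((α j) ^ 2 * w₁ ^ 2 + (2 * (α j * β j)) * (w₁ * w₂)
                + (β j) ^ 2 * w₂ ^ 2) :=
              Finset.sum_congr rfl (fun j _ => by rw [hc j, hDz j]; ring)
          _ = _ := by
              rw [Finset.sum_add_distrib, Finset.sum_add_distrib,
                ← Finset.sum_mul, ← Finset.sum_mul, ← Finset.sum_mul,
                ← Finset.mul_sum]
      rw [hstep]
      linear_combination hqr
    set u : ℂ → ℂ := fun ζ => ∑ j, (2 * c j * ρ j ζ + ζ * (ρ j ζ) ^ 2) with hudef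
    have hucont : ∀ e : ℂ, ContinuousAt (fun t : ℝ => u (e * (t:ℂ))) 0 := by
      intro e
      have : ∀ j, ContinuousAt
          (fun t : ℝ => 2 * c j * ρ j (e * (t:ℂ)) + (e * (t:ℂ)) * (ρ j (e * (t:ℂ))) ^ 2) 0 := by
        intro j
        exact (continuousAt_const.mul (hρcont j e)).add
          ((by fun_prop : ContinuousAt (fun t : ℝ => e * (t:ℂ)) 0).mul ((hρcont j e).pow 2))
      exact tendsto_finset_sum _ (fun j _ => this j)
    have hu : ∀ ζ : ℂ, ∑ j, (f j ζ) ^ 2 = ζ ^ 3 * u ζ := by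
      intro ζ
      calc ∑ j, (f j ζ) ^ 2
          = ∑ j, (ζ ^ 2 * (c j) ^ 2 + ζ ^ 3 * (2 * c j * ρ j ζ + ζ * (ρ j ζ) ^ 2)) :=
            Finset.sum_congr rfl (fun j _ => by rw [hdecomp j ζ]; ring)
        _ = ζ ^ 2 * ∑ j, (c j) ^ 2 + ζ ^ 3 * u ζ := by
            rw [Finset.sum_add_distrib, ← Finset.mul_sum, ← Finset.mul_sum, hudef]
        _ = ζ ^ 3 * u ζ := by rw [hQ]; ring
    set Wa : ℂ := ∑ j, c j * (starRingEnd ℂ) (a j) with hWadef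
    set Gc : ℂ → ℂ := fun ζ => ∑ j, c j * (starRingEnd ℂ) (g3 j ζ) with hGcdef
    have hGccont : ∀ e : ℂ, ContinuousAt (fun t : ℝ => Gc (e * (t:ℂ))) 0 := by
      intro e
      exact tendsto_finset_sum _
        (fun j _ => continuousAt_const.mul
          ((Complex.continuous_conj.continuousAt).comp (contAux (hg3a j) e)))
    set Cs : ℝ := ∑ j, Complex.normSq (c j) with hCsdef
    -- the key identity on each line, at radius |t|
    have key : ∀ e : ℂ, Complex.normSq e = 1 → ∀ t : ℝ, ((e * (t:ℂ)) • z₀ ∈ U) →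
        t ^ 2 * Cs + t ^ 4 * (∑ j, Complex.normSq (ρ j (e * (t:ℂ))))
          + 2 * t ^ 3 * ((starRingEnd ℂ) e * Wa).re
          + 2 * t ^ 4 * (((starRingEnd ℂ) e) ^ 2 * Gc (e * (t:ℂ))).re
        = p * (s * t ^ 2) - (p.choose 2 : ℝ) * (s * t ^ 2) ^ 2
          - (s * t ^ 2) ^ 3 * R (s * t ^ 2)
          + t ^ 6 / 4 * Complex.normSq (u (e * (t:ℂ))) := by
      intro e he t hz
      have h := heq _ hz
      have e1 : ∑ v, ‖((e * (t:ℂ)) • z₀) v‖ ^ 2 = s * t ^ 2 := by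
        have : ∀ v, ‖((e * (t:ℂ)) • z₀) v‖ ^ 2
            = Complex.normSq (z₀ v) * t ^ 2 := by
          intro v
          rw [Pi.smul_apply, smul_eq_mul, Complex.sq_norm, Complex.normSq_mul,
            Complex.normSq_mul, he, Complex.normSq_ofReal, one_mul, sq]
          ring
        rw [Finset.sum_congr rfl (fun v _ => this v), ← Finset.sum_mul, hsdef]
      have e2 : ‖∑ j, (F ((e * (t:ℂ)) • z₀) j) ^ 2‖ ^ 2
          = (t ^ 2) ^ 3 * Complex.normSq (u (e * (t:ℂ))) := by
        rw [Complex.sq_norm]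
        have : ∑ j, (F ((e * (t:ℂ)) • z₀) j) ^ 2 = (e * (t:ℂ)) ^ 3 * u (e * (t:ℂ)) :=
          hu (e * (t:ℂ))
        rw [this, Complex.normSq_mul, map_pow, Complex.normSq_mul, he,
          Complex.normSq_ofReal, one_mul, sq]
        try ring
      have e3 : ∑ j, ‖F ((e * (t:ℂ)) • z₀) j‖ ^ 2
          = t ^ 2 * Cs + t ^ 4 * (∑ j, Complex.normSq (ρ j (e * (t:ℂ))))
            + 2 * t ^ 3 * ((starRingEnd ℂ) e * Wa).re
            + 2 * t ^ 4 * (((starRingEnd ℂ) e) ^ 2 * Gc (e * (t:ℂ))).re := by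
        have hterm : ∀ j, ‖F ((e * (t:ℂ)) • z₀) j‖ ^ 2
            = t ^ 2 * Complex.normSq (c j)
              + t ^ 4 * Complex.normSq (ρ j (e * (t:ℂ)))
              + 2 * t ^ 3 * ((starRingEnd ℂ) e * (c j * (starRingEnd ℂ) (a j))).re
              + 2 * t ^ 4 * (((starRingEnd ℂ) e) ^ 2
                  * (c j * (starRingEnd ℂ) (g3 j (e * (t:ℂ))))).re := by
          intro j
          have : ‖F ((e * (t:ℂ)) • z₀) j‖ ^ 2 = Complex.normSq (f j (e * (t:ℂ))) := by
            rw [Complex.sq_norm]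
          rw [this, hdecomp j (e * (t:ℂ)), hρdef]
          exact normSq_expand' e he t (c j) (a j) (g3 j (e * (t:ℂ)))
        rw [Finset.sum_congr rfl (fun j _ => hterm j)]
        rw [Finset.sum_add_distrib, Finset.sum_add_distrib, Finset.sum_add_distrib]
        congr 1
        · congr 1
          · congr 1
            · rw [← Finset.mul_sum, hCsdef]
            · rw [← Finset.mul_sum]
          · rw [← Finset.mul_sum, ← Complex.re_sum, ← Finset.mul_sum, hWadef]
        · rw [← Finset.mul_sum, ← Complex.re_sum, ← Finset.mul_sum, hGcdef]
      rw [e1, e2, e3, hR (s * t ^ 2)] at h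
      linear_combination h
    -- eventual membership
    have hmem : ∀ e : ℂ, ∀ᶠ (t : ℝ) in 𝓝[≠] (0:ℝ), ((e * (t:ℂ)) • z₀) ∈ U := by
      intro e
      have hψ : ContinuousAt (fun t : ℝ => (e * (t:ℂ)) • z₀) 0 := by fun_prop
      have h1 : {x : ℝ | (e * (x:ℂ)) • z₀ ∈ U} ∈ 𝓝 (0:ℝ) :=
        hψ.preimage_mem_nhds (by simpa using hU.mem_nhds h0)
      exact nhdsWithin_le_nhds h1
    have hne_t : ∀ᶠ (t : ℝ) in 𝓝[≠] (0:ℝ), t ≠ 0 := by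
      have := self_mem_nhdsWithin (a := (0:ℝ)) (s := {x : ℝ | x ≠ 0})
      exact this
    -- Step 1 : Cs = p * s
    have hCs : Cs = p * s := by
      set Φ : ℝ → ℝ := fun t => Cs + t ^ 2 * (∑ j, Complex.normSq (ρ j ((1:ℂ) * (t:ℂ))))
        + 2 * t * ((starRingEnd ℂ) (1:ℂ) * Wa).re
        + 2 * t ^ 2 * (((starRingEnd ℂ) (1:ℂ)) ^ 2 * Gc ((1:ℂ) * (t:ℂ))).re with hΦdef
      set Ψ : ℝ → ℝ := fun t => p * s - (p.choose 2 : ℝ) * s ^ 2 * t ^ 2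
        - s ^ 3 * t ^ 4 * R (s * t ^ 2) + t ^ 4 / 4 * Complex.normSq (u ((1:ℂ) * (t:ℂ))) with hΨdef
      have hEv : ∀ᶠ (t : ℝ) in 𝓝[≠] (0:ℝ), Φ t = Ψ t := by
        filter_upwards [hmem 1, hne_t] with t hz ht
        have E := key 1 (by simp) t hz
        have h2 : t ^ 2 * Φ t = t ^ 2 * Ψ t := by
          rw [hΦdef, hΨdef]
          linear_combination E
        exact mul_left_cancel₀ (pow_ne_zero 2 ht) h2
      have hΦc : ContinuousAt Φ 0 := by
        apply ContinuousAt.add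
        apply ContinuousAt.add
        apply ContinuousAt.add
        · exact continuousAt_const
        · exact ((continuous_pow 2).continuousAt).mul
            (contAtSum (fun j => (Complex.continuous_normSq.continuousAt).comp (hρcont j 1)))
        · fun_prop
        · exact ((by fun_prop : ContinuousAt (fun t : ℝ => 2 * t ^ 2) 0)).mul
            ((Complex.continuous_re.continuousAt).comp (continuousAt_const.mul (hGccont 1)))
      have hΨc : ContinuousAt Ψ 0 := by
        apply ContinuousAt.add
        apply ContinuousAt.sub
        apply ContinuousAt.sub
        · exact continuousAt_const
        · fun_prop
        · exact (by fun_prop : ContinuousAt (fun t : ℝ => s ^ 3 * t ^ 4) 0).mul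
            ((hRc.continuousAt).comp (by fun_prop))
        · exact (by fun_prop : ContinuousAt (fun t : ℝ => t ^ 4 / 4) 0).mul
            ((Complex.continuous_normSq.continuousAt).comp (hucont 1))
      have h1 : Filter.Tendsto Φ (𝓝[≠] (0:ℝ)) (𝓝 (Φ 0)) :=
        (hΦc.tendsto).mono_left nhdsWithin_le_nhds
      have h2 : Filter.Tendsto Ψ (𝓝[≠] (0:ℝ)) (𝓝 (Ψ 0)) :=
        (hΨc.tendsto).mono_left nhdsWithin_le_nhds
      have h3 : Φ 0 = Ψ 0 := tendsto_nhds_unique (h1.congr' hEv) h2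
      have hΦ0 : Φ 0 = Cs := by simp [hΦdef]
      have hΨ0 : Ψ 0 = p * s := by simp [hΨdef]
      rw [hΦ0, hΨ0] at h3
      exact h3
    -- Step 2 : the fourth-order coefficient
    have hfinal : (4:ℝ) * (∑ j, Complex.normSq (a j)) = -4 * (p.choose 2 : ℝ) * s ^ 2 := by
      set Θ : ℝ → ℝ := fun t =>
        (∑ j, Complex.normSq (ρ j ((t:ℂ))))
        + (∑ j, Complex.normSq (ρ j (I * (t:ℂ))))
        + (∑ j, Complex.normSq (ρ j (-(t:ℂ))))
        + (∑ j, Complex.normSq (ρ j (-(I * (t:ℂ)))))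
        + 2 * ((Gc ((t:ℂ))).re - (Gc (I * (t:ℂ))).re
            + (Gc (-(t:ℂ))).re - (Gc (-(I * (t:ℂ)))).re) with hΘdef
      set Ξ : ℝ → ℝ := fun t =>
        -4 * (p.choose 2 : ℝ) * s ^ 2 - 4 * s ^ 3 * t ^ 2 * R (s * t ^ 2)
        + t ^ 2 / 4 * (Complex.normSq (u ((t:ℂ))) + Complex.normSq (u (I * (t:ℂ)))
            + Complex.normSq (u (-(t:ℂ))) + Complex.normSq (u (-(I * (t:ℂ))))) with hΞdef
      have hEv : ∀ᶠ (t : ℝ) in 𝓝[≠] (0:ℝ), Θ t = Ξ t := by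
        filter_upwards [hmem 1, hmem I, hmem (-1), hmem (-I), hne_t] with t hz1 hz2 hz3 hz4 ht
        have E1 := key 1 (by simp) t hz1
        have E2 := key I (by simp) t hz2
        have E3 := key (-1) (by simp) t hz3
        have E4 := key (-I) (by simp) t hz4
        simp only [map_one, map_neg, Complex.conj_I, one_pow, one_mul, neg_neg, neg_mul,
          neg_one_sq, neg_one_mul, neg_sq, Complex.neg_re, Complex.I_sq] at E1 E2 E3 E4
        have h4 : t ^ 4 * Θ t = t ^ 4 * Ξ t := by
          rw [hΘdef, hΞdef]
          simp only []
          linear_combination E1 + E2 + E3 + E4 - (4 * t ^ 2) * hCs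
        exact mul_left_cancel₀ (pow_ne_zero 4 ht) h4
      have hρc' : ∀ (j : Fin m) (e : ℂ), ContinuousAt (fun t : ℝ => ρ j (e * (t:ℂ))) 0 := hρcont
      have hΘc : ContinuousAt Θ 0 := by
        apply ContinuousAt.add
        apply ContinuousAt.add
        apply ContinuousAt.add
        apply ContinuousAt.add
        · exact contAtSum (fun j => (Complex.continuous_normSq.continuousAt).comp
            (by simpa using hρc' j 1))
        · exact contAtSum (fun j => (Complex.continuous_normSq.continuousAt).comp (hρc' j I))
        · exact contAtSum (fun j => (Complex.continuous_normSq.continuousAt).comp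
            (by simpa using hρc' j (-1)))
        · exact contAtSum (fun j => (Complex.continuous_normSq.continuousAt).comp
            (by simpa using hρc' j (-I)))
        · apply continuousAt_const.mul
          apply ContinuousAt.add
          apply ContinuousAt.add
          apply ContinuousAt.sub
          · exact (Complex.continuous_re.continuousAt).comp (by simpa using hGccont 1)
          · exact (Complex.continuous_re.continuousAt).comp (hGccont I)
          · exact (Complex.continuous_re.continuousAt).comp (by simpa using hGccont (-1))
          · exact ((Complex.continuous_re.continuousAt).comp (by simpa using hGccont (-I))).neg
      have hΞc : ContinuousAt Ξ 0 := by
        apply ContinuousAt.add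
        apply ContinuousAt.sub
        · exact continuousAt_const
        · exact (by fun_prop : ContinuousAt (fun t : ℝ => 4 * s ^ 3 * t ^ 2) 0).mul
            ((hRc.continuousAt).comp (by fun_prop))
        · apply (by fun_prop : ContinuousAt (fun t : ℝ => t ^ 2 / 4) 0).mul
          apply ContinuousAt.add
          apply ContinuousAt.add
          apply ContinuousAt.add
          · exact (Complex.continuous_normSq.continuousAt).comp (by simpa using hucont 1)
          · exact (Complex.continuous_normSq.continuousAt).comp (hucont I)
          · exact (Complex.continuous_normSq.continuousAt).comp (by simpa using hucont (-1))
          · exact (Complex.continuous_normSq.continuousAt).comp (by simpa using hucont (-I))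
      have h1 : Filter.Tendsto Θ (𝓝[≠] (0:ℝ)) (𝓝 (Θ 0)) :=
        (hΘc.tendsto).mono_left nhdsWithin_le_nhds
      have h2 : Filter.Tendsto Ξ (𝓝[≠] (0:ℝ)) (𝓝 (Ξ 0)) :=
        (hΞc.tendsto).mono_left nhdsWithin_le_nhds
      have h3 : Θ 0 = Ξ 0 := tendsto_nhds_unique (h1.congr' hEv) h2
      have hΘ0 : Θ 0 = 4 * (∑ j, Complex.normSq (a j)) := by
        simp [hΘdef, hρ0]
        ring
      have hΞ0 : Ξ 0 = -4 * (p.choose 2 : ℝ) * s ^ 2 := by simp [hΞdef]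
      rw [hΘ0, hΞ0] at h3
      exact h3
    have hchoose : (1:ℝ) ≤ (p.choose 2 : ℝ) := by
      have : 1 ≤ p.choose 2 := Nat.succ_le_of_lt (Nat.choose_pos hp2)
      exact_mod_cast this
    have hsum_nn : (0:ℝ) ≤ ∑ j, Complex.normSq (a j) :=
      Finset.sum_nonneg (fun j _ => Complex.normSq_nonneg _)
    have hs2 : (0:ℝ) < s ^ 2 := pow_pos hspos 2
    have h5 : (1:ℝ) * s ^ 2 ≤ (p.choose 2 : ℝ) * s ^ 2 :=
      mul_le_mul_of_nonneg_right hchoose (le_of_lt hs2)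
    linarith
  refine ⟨hp1, ?_⟩
  have hm0 : (0:ℝ) < m := by exact_mod_cast Nat.lt_of_lt_of_le Nat.zero_lt_one hm
  have hn1 : (0:ℝ) < (n:ℝ) + 1 := by positivity
  rw [hp1] at hpl
  rw [eq_div_iff (ne_of_gt hn1)]
  have : (m:ℝ) = lam * ((n:ℝ) + 1) := by
    field_simp at hpl
    push_cast at hpl
    linarith
  linarith
end

section
/- The map G_1(z) = (z, 1 - sqrt(1 - z^2)) from the unit disc Δ ⊂ C to C^2 satisfies |z|^2 + |g(z)|^2 - (1/4)|z^2 + g(z)^2|^2 = |z|^2 where g(z) = 1 - sqrt(1-z^2), hence G_1 maps Δ into D^{IV}_2 and is a proper holomorphic map (the defining function 1 - |z|^2 - |g|^2 + (1/4)|z^2+g^2|^2 = 1 - |z|^2 tends to 0 as |z| → 1). -/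
/-- The branch `g(z) = 1 - √(1 - z²)` of the square root on the unit disc. -/
noncomputable def g12 (z : ℂ) : ℂ := 1 - (1 - z ^ 2) ^ ((1 : ℂ) / 2)

lemma re_pos_aux (z : ℂ) (hz : ‖z‖ < 1) : 0 < (1 - z ^ 2).re := by
  have h1 : (z ^ 2).re ≤ ‖z ^ 2‖ := Complex.re_le_norm _
  have h2 : ‖z ^ 2‖ < 1 := by
    rw [norm_pow]
    nlinarith [norm_nonneg z]
  simp [Complex.sub_re]
  linarith

lemma sq_sqrt_aux (z : ℂ) : ((1 - z ^ 2) ^ ((1 : ℂ) / 2)) ^ 2 = 1 - z ^ 2 := by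
  have := Complex.cpow_nat_inv_pow (1 - z ^ 2) (n := 2) two_ne_zero
  rw [show ((2 : ℕ) : ℂ)⁻¹ = (1 : ℂ) / 2 by push_cast; ring] at this
  exact this

lemma re_sqrt_pos_aux (z : ℂ) (hz : ‖z‖ < 1) :
    0 < ((1 - z ^ 2) ^ ((1 : ℂ) / 2)).re := by
  rw [show ((1 : ℂ) / 2) = (2⁻¹ : ℂ) by norm_num, Complex.cpow_inv_two_re]
  apply Real.sqrt_pos.2
  have h1 := re_pos_aux z hz
  have h2 := Complex.re_le_norm (1 - z ^ 2)
  linarith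

/-- The map `G₁(z) = (z, 1 - √(1-z²))` is holomorphic on the unit disc, satisfies
`|z|² + |g|² - (1/4)|z² + g²|² = |z|²`, and maps the disc into `D^{IV}₂`. -/
theorem stmt12 :
    DifferentiableOn ℂ g12 (Metric.ball (0 : ℂ) 1) ∧
    ∀ z ∈ Metric.ball (0 : ℂ) 1,
      (‖z‖ ^ 2 + ‖g12 z‖ ^ 2
          - (1 / 4) * ‖z ^ 2 + (g12 z) ^ 2‖ ^ 2
        = ‖z‖ ^ 2) ∧
      ‖z‖ ^ 2 + ‖g12 z‖ ^ 2 < 2 ∧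
      0 < 1 - ‖z‖ ^ 2 - ‖g12 z‖ ^ 2
          + (1 / 4) * ‖z ^ 2 + (g12 z) ^ 2‖ ^ 2 := by
  constructor
  · intro z hz
    rw [Metric.mem_ball, dist_zero_right] at hz
    apply DifferentiableAt.differentiableWithinAt
    unfold g12
    apply DifferentiableAt.sub (differentiableAt_const _)
    apply DifferentiableAt.cpow
    · fun_prop
    · exact differentiableAt_const _
    · exact Or.inl (re_pos_aux z hz)
  · intro z hz
    rw [Metric.mem_ball, dist_zero_right] at hz
    set w : ℂ := (1 - z ^ 2) ^ ((1 : ℂ) / 2) with hw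
    have hw2 : w ^ 2 = 1 - z ^ 2 := sq_sqrt_aux z
    have hwre : 0 < w.re := re_sqrt_pos_aux z hz
    have hg : g12 z = 1 - w := rfl
    have hsum : z ^ 2 + (g12 z) ^ 2 = 2 * g12 z := by rw [hg]; linear_combination hw2
    have habs : ‖z ^ 2 + (g12 z) ^ 2‖ = 2 * ‖g12 z‖ := by
      rw [hsum, norm_mul]; norm_num
    -- bound |g| ≤ |z|^2
    have hprod : g12 z * (1 + w) = z ^ 2 := by rw [hg]; linear_combination -hw2
    have h1w : 1 < ‖1 + w‖ := by
      have := Complex.re_le_norm (1 + w)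
      simp only [Complex.add_re, Complex.one_re] at this
      linarith
    have hgle : ‖g12 z‖ ≤ ‖z‖ ^ 2 := by
      have := congrArg (‖·‖) hprod
      rw [norm_mul, norm_pow] at this
      nlinarith [norm_nonneg (g12 z), norm_nonneg z]
    have heq : ‖z‖ ^ 2 + ‖g12 z‖ ^ 2
        - (1 / 4) * ‖z ^ 2 + (g12 z) ^ 2‖ ^ 2 = ‖z‖ ^ 2 := by
      rw [habs]; ring
    have hg1 : ‖g12 z‖ < 1 := by
      apply lt_of_le_of_lt hgle
      nlinarith [norm_nonneg z]
    refine ⟨heq, ?_, ?_⟩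
    · nlinarith [norm_nonneg (g12 z), norm_nonneg z]
    · nlinarith [norm_nonneg z]
end
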